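/- arXiv:1010.4058 — 3 statements merged into one kernel-verified Lean document; each statement's English description precedes it below -/
import Mathlib

section
/- The center of the group H_{2,2} equals {1, -1}, where 1 is the 4×4 identity matrix. -/
open Matrix

/-- σ₁ : (x,y,z,w) ↦ (z,w,x,y) -/
def sigma1m : Matrix (Fin 4) (Fin 4) ℂ :=
  !![0,0,1,0; 0,0,0,1; 1,0,0,0; 0,1,0,0]

/-- σ₂ : (x,y,z,w) ↦ (y,x,w,z) -/
def sigma2m : Matrix (Fin 4) (Fin 4) ℂ :=
  !![0,1,0,0; 1,0,0,0; 0,0,0,1; 0,0,1,0]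

/-- τ₁ : (x,y,z,w) ↦ (x,y,-z,-w) -/
def tau1m : Matrix (Fin 4) (Fin 4) ℂ :=
  !![1,0,0,0; 0,1,0,0; 0,0,-1,0; 0,0,0,-1]

/-- τ₂ : (x,y,z,w) ↦ (x,-y,z,-w) -/
def tau2m : Matrix (Fin 4) (Fin 4) ℂ :=
  !![1,0,0,0; 0,-1,0,0; 0,0,1,0; 0,0,0,-1]

def sigma1 : Matrix.SpecialLinearGroup (Fin 4) ℂ :=
  ⟨sigma1m, by simp [sigma1m, Matrix.det_succ_row_zero, Fin.sum_univ_succ, Fin.succAbove]⟩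

def sigma2 : Matrix.SpecialLinearGroup (Fin 4) ℂ :=
  ⟨sigma2m, by simp [sigma2m, Matrix.det_succ_row_zero, Fin.sum_univ_succ, Fin.succAbove]⟩

def tau1 : Matrix.SpecialLinearGroup (Fin 4) ℂ :=
  ⟨tau1m, by simp [tau1m, Matrix.det_succ_row_zero, Fin.sum_univ_succ, Fin.succAbove]⟩

def tau2 : Matrix.SpecialLinearGroup (Fin 4) ℂ :=
  ⟨tau2m, by simp [tau2m, Matrix.det_succ_row_zero, Fin.sum_univ_succ, Fin.succAbove]⟩

/-- The Heisenberg group `H_{2,2}`, as a subgroup of `SL(4,ℂ)`. -/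
def H22 : Subgroup (Matrix.SpecialLinearGroup (Fin 4) ℂ) :=
  Subgroup.closure {sigma1, sigma2, tau1, tau2}


instance : Fact (Even (Fintype.card (Fin 4))) := ⟨⟨2, rfl⟩⟩

lemma H22_real : H22 ≤ MonoidHom.eqLocus
    (Matrix.SpecialLinearGroup.map (n := Fin 4) (starRingEnd ℂ))
    (MonoidHom.id _) := by
  rw [H22, Subgroup.closure_le]
  rintro x (rfl | rfl | rfl | rfl) <;>
  · show Matrix.SpecialLinearGroup.map (starRingEnd ℂ) _ = _
    refine Subtype.ext ?_
    rw [Matrix.SpecialLinearGroup.map_apply_coe, MonoidHom.id_apply]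
    ext i j
    fin_cases i <;> fin_cases j <;>
      simp [sigma1, sigma2, tau1, tau2, sigma1m, sigma2m, tau1m, tau2m,
        Matrix.vecHead, Matrix.vecTail]

/-- The center of `H_{2,2}` equals `{1, -1}`. -/
theorem H22_center (g : H22) :
    g ∈ Subgroup.center H22 ↔
      (g : Matrix.SpecialLinearGroup (Fin 4) ℂ) = 1 ∨
      (g : Matrix.SpecialLinearGroup (Fin 4) ℂ) = -1 := by
  constructor
  · intro hg
    rw [Subgroup.mem_center_iff] at hg
    have hs1 : sigma1 ∈ H22 := Subgroup.subset_closure (by simp)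
    have hs2 : sigma2 ∈ H22 := Subgroup.subset_closure (by simp)
    have ht1 : tau1 ∈ H22 := Subgroup.subset_closure (by simp)
    have ht2 : tau2 ∈ H22 := Subgroup.subset_closure (by simp)
    set M : Matrix (Fin 4) (Fin 4) ℂ := ((g : Matrix.SpecialLinearGroup (Fin 4) ℂ) : Matrix (Fin 4) (Fin 4) ℂ) with hM
    have comm : ∀ (h : Matrix.SpecialLinearGroup (Fin 4) ℂ), h ∈ H22 →
        (h : Matrix (Fin 4) (Fin 4) ℂ) * M = M * (h : Matrix (Fin 4) (Fin 4) ℂ) := by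
      intro h hh
      have e := hg ⟨h, hh⟩
      have e2 := congrArg (fun x : H22 => ((x : Matrix.SpecialLinearGroup (Fin 4) ℂ) : Matrix (Fin 4) (Fin 4) ℂ)) e
      simpa using e2
    have c1 : tau1m * M = M * tau1m := comm tau1 ht1
    have c2 : tau2m * M = M * tau2m := comm tau2 ht2
    have c3 : sigma1m * M = M * sigma1m := comm sigma1 hs1
    have c4 : sigma2m * M = M * sigma2m := comm sigma2 hs2
    have z01 : M 0 1 = 0 := by
      have h := Matrix.ext_iff.mpr c2 0 1
      simp [Matrix.mul_apply, Fin.sum_univ_four, tau1m, tau2m, Matrix.vecHead, Matrix.vecTail] at h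
      linear_combination h / 2
    have z02 : M 0 2 = 0 := by
      have h := Matrix.ext_iff.mpr c1 0 2
      simp [Matrix.mul_apply, Fin.sum_univ_four, tau1m, tau2m, Matrix.vecHead, Matrix.vecTail] at h
      linear_combination h / 2
    have z03 : M 0 3 = 0 := by
      have h := Matrix.ext_iff.mpr c1 0 3
      simp [Matrix.mul_apply, Fin.sum_univ_four, tau1m, tau2m, Matrix.vecHead, Matrix.vecTail] at h
      linear_combination h / 2
    have z10 : M 1 0 = 0 := by
      have h := Matrix.ext_iff.mpr c2 1 0
      simp [Matrix.mul_apply, Fin.sum_univ_four, tau1m, tau2m, Matrix.vecHead, Matrix.vecTail] at h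
      linear_combination -h / 2
    have z12 : M 1 2 = 0 := by
      have h := Matrix.ext_iff.mpr c1 1 2
      simp [Matrix.mul_apply, Fin.sum_univ_four, tau1m, tau2m, Matrix.vecHead, Matrix.vecTail] at h
      linear_combination h / 2
    have z13 : M 1 3 = 0 := by
      have h := Matrix.ext_iff.mpr c1 1 3
      simp [Matrix.mul_apply, Fin.sum_univ_four, tau1m, tau2m, Matrix.vecHead, Matrix.vecTail] at h
      linear_combination h / 2
    have z20 : M 2 0 = 0 := by
      have h := Matrix.ext_iff.mpr c1 2 0
      simp [Matrix.mul_apply, Fin.sum_univ_four, tau1m, tau2m, Matrix.vecHead, Matrix.vecTail] at h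
      linear_combination -h / 2
    have z21 : M 2 1 = 0 := by
      have h := Matrix.ext_iff.mpr c1 2 1
      simp [Matrix.mul_apply, Fin.sum_univ_four, tau1m, tau2m, Matrix.vecHead, Matrix.vecTail] at h
      linear_combination -h / 2
    have z23 : M 2 3 = 0 := by
      have h := Matrix.ext_iff.mpr c2 2 3
      simp [Matrix.mul_apply, Fin.sum_univ_four, tau1m, tau2m, Matrix.vecHead, Matrix.vecTail] at h
      linear_combination h / 2
    have z30 : M 3 0 = 0 := by
      have h := Matrix.ext_iff.mpr c1 3 0
      simp [Matrix.mul_apply, Fin.sum_univ_four, tau1m, tau2m, Matrix.vecHead, Matrix.vecTail] at h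
      linear_combination -h / 2
    have z31 : M 3 1 = 0 := by
      have h := Matrix.ext_iff.mpr c1 3 1
      simp [Matrix.mul_apply, Fin.sum_univ_four, tau1m, tau2m, Matrix.vecHead, Matrix.vecTail] at h
      linear_combination -h / 2
    have z32 : M 3 2 = 0 := by
      have h := Matrix.ext_iff.mpr c2 3 2
      simp [Matrix.mul_apply, Fin.sum_univ_four, tau1m, tau2m, Matrix.vecHead, Matrix.vecTail] at h
      linear_combination -h / 2
    have d11 : M 1 1 = M 0 0 := by
      have h := Matrix.ext_iff.mpr c4 0 1
      simp [Matrix.mul_apply, Fin.sum_univ_four, sigma2m, Matrix.vecHead, Matrix.vecTail] at h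
      linear_combination h
    have d22 : M 2 2 = M 0 0 := by
      have h := Matrix.ext_iff.mpr c3 0 2
      simp [Matrix.mul_apply, Fin.sum_univ_four, sigma1m, Matrix.vecHead, Matrix.vecTail] at h
      linear_combination h
    have d33 : M 3 3 = M 0 0 := by
      have h := Matrix.ext_iff.mpr c4 2 3
      simp [Matrix.mul_apply, Fin.sum_univ_four, sigma2m, Matrix.vecHead, Matrix.vecTail] at h
      linear_combination h + d22
    have key : M = M 0 0 • (1 : Matrix (Fin 4) (Fin 4) ℂ) := by
      ext i j
      fin_cases i <;> fin_cases j <;>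
        simp [Matrix.one_apply, z01, z02, z03, z10, z12, z13, z20, z21, z23,
          z30, z31, z32, d11, d22, d33]
    set l : ℂ := M 0 0 with hl
    have hdet : l ^ 4 = 1 := by
      have hd : M.det = 1 := (g : Matrix.SpecialLinearGroup (Fin 4) ℂ).2
      rw [key] at hd
      simpa [Matrix.det_smul] using hd
    have hreal : (starRingEnd ℂ) l = l := by
      have hfeq : Matrix.SpecialLinearGroup.map (starRingEnd ℂ)
          (g : Matrix.SpecialLinearGroup (Fin 4) ℂ) = (g : Matrix.SpecialLinearGroup (Fin 4) ℂ) :=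
        H22_real g.2
      have h2 := congrArg (fun x : Matrix.SpecialLinearGroup (Fin 4) ℂ =>
        (x : Matrix (Fin 4) (Fin 4) ℂ) 0 0) hfeq
      simpa using h2
    have him : l.im = 0 := Complex.conj_eq_iff_im.mp hreal
    have hprod : (l - 1) * ((l + 1) * (l ^ 2 + 1)) = 0 := by linear_combination hdet
    have hl2 : l = 1 ∨ l = -1 := by
      rcases mul_eq_zero.mp hprod with h | h
      · exact Or.inl (by linear_combination h)
      rcases mul_eq_zero.mp h with h | h
      · exact Or.inr (by linear_combination h)
      · exfalso
        have h2 : l ^ 2 = -1 := by linear_combination h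
        have h3 := congrArg Complex.re h2
        simp [pow_two, Complex.mul_re, him] at h3
        nlinarith [sq_nonneg l.re]
    rcases hl2 with h | h
    · left
      refine Subtype.ext ?_
      show M = _
      rw [key, h]
      simp
    · right
      refine Subtype.ext ?_
      show M = ((-1 : Matrix.SpecialLinearGroup (Fin 4) ℂ) : Matrix (Fin 4) (Fin 4) ℂ)
      rw [key, h, Matrix.SpecialLinearGroup.coe_neg]
      simp
  · rintro (h | h) <;> rw [Subgroup.mem_center_iff] <;> intro b <;>
      refine Subtype.ext (Subtype.ext ?_) <;>
      simp only [Subgroup.coe_mul, Matrix.SpecialLinearGroup.coe_mul, h,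
        Matrix.SpecialLinearGroup.coe_neg, Matrix.SpecialLinearGroup.coe_one,
        mul_one, one_mul, mul_neg, neg_mul]
end

section
/- The commutator subgroup of H_{2,2} equals {1, -1}. -/
open Matrix

abbrev SL4 := Matrix.SpecialLinearGroup (Fin 4) ℂ

/-- Commute-or-anticommute relation. -/
def CC (a b : SL4) : Prop := a * b = b * a ∨ a * b = -(b * a)

lemma sl_ext {a b : SL4} (h : (a : Matrix (Fin 4) (Fin 4) ℂ) = b) : a = b := Subtype.ext h

lemma CC_symm {a b : SL4} (h : CC a b) : CC b a := by
  rcases h with h | h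
  · exact Or.inl h.symm
  · right; rw [h, neg_neg]

lemma CC_one_left (b : SL4) : CC 1 b := Or.inl (by group)

lemma CC_mul_left {a₁ a₂ b : SL4} (h₁ : CC a₁ b) (h₂ : CC a₂ b) : CC (a₁ * a₂) b := by
  rcases h₁ with h₁ | h₁ <;> rcases h₂ with h₂ | h₂
  · left; rw [mul_assoc, h₂, ← mul_assoc, h₁, mul_assoc]
  · right; rw [mul_assoc, h₂, mul_neg, ← mul_assoc, h₁, mul_assoc]
  · right; rw [mul_assoc, h₂, ← mul_assoc, h₁, neg_mul, mul_assoc]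
  · left; rw [mul_assoc, h₂, mul_neg, ← mul_assoc, h₁, neg_mul, neg_neg, mul_assoc]

lemma CC_inv_left {a b : SL4} (h : CC a b) : CC a⁻¹ b := by
  rcases h with h | h
  · left
    calc a⁻¹ * b = a⁻¹ * (b * a) * a⁻¹ := by group
    _ = a⁻¹ * (a * b) * a⁻¹ := by rw [h]
    _ = b * a⁻¹ := by group
  · right
    calc a⁻¹ * b = a⁻¹ * (b * a) * a⁻¹ := by group
    _ = a⁻¹ * (-(a * b)) * a⁻¹ := by rw [h, neg_neg]
    _ = -(b * a⁻¹) := by rw [mul_neg, neg_mul]; congr 1; group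

-- the sixteen generator relations
lemma rel_s1s2 : sigma1 * sigma2 = sigma2 * sigma1 := by
  apply sl_ext; simp only [Matrix.SpecialLinearGroup.coe_mul]; simp [sigma1, sigma2, sigma1m, sigma2m]
lemma rel_t1t2 : tau1 * tau2 = tau2 * tau1 := by
  apply sl_ext; simp only [Matrix.SpecialLinearGroup.coe_mul]; simp [tau1, tau2, tau1m, tau2m]
lemma rel_s1t1 : sigma1 * tau1 = -(tau1 * sigma1) := by
  apply sl_ext
  simp only [Matrix.SpecialLinearGroup.coe_mul, Matrix.SpecialLinearGroup.coe_neg]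
  simp [sigma1, tau1, sigma1m, tau1m]
lemma rel_s1t2 : sigma1 * tau2 = tau2 * sigma1 := by
  apply sl_ext; simp only [Matrix.SpecialLinearGroup.coe_mul]; simp [sigma1, tau2, sigma1m, tau2m]
lemma rel_s2t1 : sigma2 * tau1 = tau1 * sigma2 := by
  apply sl_ext; simp only [Matrix.SpecialLinearGroup.coe_mul]; simp [sigma2, tau1, sigma2m, tau1m]
lemma rel_s2t2 : sigma2 * tau2 = -(tau2 * sigma2) := by
  apply sl_ext
  simp only [Matrix.SpecialLinearGroup.coe_mul, Matrix.SpecialLinearGroup.coe_neg]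
  simp [sigma2, tau2, sigma2m, tau2m]

lemma comm_commutator {x y : SL4} (h : x * y = y * x) :
    x * y * x⁻¹ * y⁻¹ = 1 := by
  calc x * y * x⁻¹ * y⁻¹ = (x * y) * (y * x)⁻¹ := by group
    _ = (x * y) * (x * y)⁻¹ := by rw [h]
    _ = 1 := mul_inv_cancel _

lemma anticomm_commutator {x y : SL4} (h : x * y = -(y * x)) :
    x * y * x⁻¹ * y⁻¹ = -1 := by
  calc x * y * x⁻¹ * y⁻¹ = (x * y) * (y * x)⁻¹ := by group
    _ = (-(y * x)) * (y * x)⁻¹ := by rw [h]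
    _ = -((y * x) * (y * x)⁻¹) := neg_mul _ _
    _ = -1 := by rw [mul_inv_cancel]

lemma gen_CC : ∀ a ∈ ({sigma1, sigma2, tau1, tau2} : Set SL4),
    ∀ b ∈ ({sigma1, sigma2, tau1, tau2} : Set SL4), CC a b := by
  have refl : ∀ x : SL4, CC x x := fun x => Or.inl rfl
  rintro a (rfl | rfl | rfl | rfl) b (rfl | rfl | rfl | rfl)
  · exact refl _
  · exact Or.inl rel_s1s2
  · exact Or.inr rel_s1t1
  · exact Or.inl rel_s1t2
  · exact CC_symm (Or.inl rel_s1s2)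
  · exact refl _
  · exact Or.inl rel_s2t1
  · exact Or.inr rel_s2t2
  · exact CC_symm (Or.inr rel_s1t1)
  · exact CC_symm (Or.inl rel_s2t1)
  · exact refl _
  · exact Or.inl rel_t1t2
  · exact CC_symm (Or.inl rel_s1t2)
  · exact CC_symm (Or.inr rel_s2t2)
  · exact CC_symm (Or.inl rel_t1t2)
  · exact refl _

lemma H22_CC : ∀ a ∈ H22, ∀ b ∈ H22, CC a b := by
  intro a ha b hb
  induction ha, hb using Subgroup.closure_induction₂ with
  | mem x y hx hy => exact gen_CC x hx y hy
  | one_left x hx => exact CC_one_left x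
  | one_right x hx => exact CC_symm (CC_one_left x)
  | mul_left x y z _ _ _ h₁ h₂ => exact CC_mul_left h₁ h₂
  | mul_right y z x _ _ _ h₁ h₂ => exact CC_symm (CC_mul_left (CC_symm h₁) (CC_symm h₂))
  | inv_left x y _ _ h => exact CC_inv_left h
  | inv_right x y _ _ h => exact CC_symm (CC_inv_left (CC_symm h))

def K : Subgroup H22 where
  carrier := {x | (x : SL4) = 1 ∨ (x : SL4) = -1}
  one_mem' := Or.inl rfl
  mul_mem' := by
    rintro a b (ha | ha) (hb | hb) <;>
      simp only [Set.mem_setOf_eq, Subgroup.coe_mul, ha, hb] <;> simp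
  inv_mem' := by
    rintro a (ha | ha) <;>
    · have hc : ((a⁻¹ : H22) : SL4) = ((a : SL4))⁻¹ := rfl
      simp only [Set.mem_setOf_eq, hc, ha]; simp

open scoped commutatorElement

/-- The commutator subgroup of `H_{2,2}` equals `{1, -1}`. -/
theorem H22_commutator (g : H22) :
    g ∈ commutator H22 ↔
      (g : Matrix.SpecialLinearGroup (Fin 4) ℂ) = 1 ∨
      (g : Matrix.SpecialLinearGroup (Fin 4) ℂ) = -1 := by
  constructor
  · intro hg
    have hle : commutator H22 ≤ K := by
      rw [commutator_def]
      rw [Subgroup.commutator_le]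
      intro a _ b _
      have hcoe : ((⁅a, b⁆ : H22) : SL4) = (a:SL4) * b * (a:SL4)⁻¹ * (b:SL4)⁻¹ := by
        push_cast [commutatorElement_def]
        group
      rcases H22_CC a a.2 b b.2 with h | h
      · left
        show ((⁅a, b⁆ : H22) : SL4) = 1
        rw [hcoe, comm_commutator h]
      · right
        show ((⁅a, b⁆ : H22) : SL4) = -1
        rw [hcoe, anticomm_commutator h]
    exact hle hg
  · intro hg
    have hs1 : sigma1 ∈ H22 := Subgroup.subset_closure (by simp)
    have ht1 : tau1 ∈ H22 := Subgroup.subset_closure (by simp)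
    rcases hg with hg | hg
    · have : g = 1 := Subtype.ext hg
      rw [this]; exact Subgroup.one_mem _
    · set a : H22 := ⟨tau1, ht1⟩
      set b : H22 := ⟨sigma1, hs1⟩
      have hcoe : ((⁅a, b⁆ : H22) : SL4) = (a:SL4) * b * (a:SL4)⁻¹ * (b:SL4)⁻¹ := by
        push_cast [commutatorElement_def]
        group
      have h1 : tau1 * sigma1 = -(sigma1 * tau1) := by rw [rel_s1t1, neg_neg]
      have key : g = ⁅a, b⁆ := by
        apply Subtype.ext
        rw [hg, hcoe]
        exact (anticomm_commutator h1).symm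
      rw [key, commutator_def]
      exact Subgroup.commutator_mem_commutator (Subgroup.mem_top _) (Subgroup.mem_top _)
end

section
/- The symplectic group Sp(4,𝔽₂) is isomorphic to the symmetric group S₆ on 6 letters. -/
set_option maxRecDepth 40000
set_option maxHeartbeats 1000000

open Matrix Equiv

private abbrev F2 := ZMod 2

private def Am : Matrix (Fin 4) (Fin 6) F2 :=
  !![1,0,0,0,1,0; 0,1,0,0,1,0; 0,0,1,0,1,0; 0,0,0,1,1,0]
private def Sm : Matrix (Fin 6) (Fin 4) F2 :=
  !![1,0,0,0; 0,1,0,0; 0,0,1,0; 0,0,0,1; 0,0,0,0; 1,1,1,1]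
private def Em : Matrix (Fin 6) (Fin 6) F2 :=
  !![0,0,0,0,1,0; 0,0,0,0,1,0; 0,0,0,0,1,0; 0,0,0,0,1,0; 0,0,0,0,1,0; 1,1,1,1,0,1]
private def Gm : Matrix (Fin 4) (Fin 4) F2 :=
  !![0,1,1,1; 1,0,1,1; 1,1,0,1; 1,1,1,0]

private lemma f_SA : Sm * Am = 1 + Em := by decide
private lemma f_AS : Am * Sm = 1 := by decide
private lemma f_G : Smᵀ * Sm = Gm := by decide
private lemma colsum_Sm : ∀ j, ∑ i, Sm i j = 0 := by decide
private lemma two0 : (2 : F2) = 0 := by decide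
private lemma EmRow : ∀ i k : Fin 6,
    Em i k = if i = 5 then (if k = 4 then 0 else 1) else (if k = 4 then 1 else 0) := by
  intro i k; fin_cases i <;> fin_cases k <;> decide
private lemma AmRow : ∀ (i : Fin 4) (k : Fin 6),
    Am i k = if (k : ℕ) = (i : ℕ) ∨ k = 4 then 1 else 0 := by
  intro i k; fin_cases i <;> fin_cases k <;> decide

private def Pm (σ : Equiv.Perm (Fin 6)) : Matrix (Fin 6) (Fin 6) F2 :=
  σ.toPEquiv.toMatrix

private lemma Pm_mul (σ τ : Perm (Fin 6)) : Pm (σ * τ) = Pm τ * Pm σ := by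
  unfold Pm
  rw [Perm.mul_def, Equiv.toPEquiv_trans, PEquiv.toMatrix_trans]

private lemma Pm_one : Pm 1 = 1 := by
  unfold Pm
  rw [show (1 : Perm (Fin 6)) = Equiv.refl (Fin 6) from rfl, Equiv.toPEquiv_refl,
    PEquiv.toMatrix_refl]

private lemma Pm_transpose (σ : Perm (Fin 6)) : (Pm σ)ᵀ = Pm σ⁻¹ := by
  unfold Pm
  rw [show σ⁻¹ = σ.symm from rfl, Equiv.toPEquiv_symm, PEquiv.toMatrix_symm]

private def phi0 (σ : Perm (Fin 6)) : Matrix (Fin 4) (Fin 4) F2 :=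
  Am * Pm σ⁻¹ * Sm

private lemma colsum (τ : Perm (Fin 6)) (j : Fin 4) : ∑ i, (Pm τ * Sm) i j = 0 := by
  unfold Pm
  rw [PEquiv.toMatrix_toPEquiv_mul]
  simp only [submatrix_apply, id_eq]
  exact (Equiv.sum_comp τ fun i => Sm i j).trans (colsum_Sm j)

private lemma Em_mul (M : Matrix (Fin 6) (Fin 4) F2) (hM : ∀ j, ∑ i, M i j = 0) :
    Em * M = Matrix.of (fun _ j => M 4 j) := by
  ext i j
  have h := hM j
  rw [Fin.sum_univ_six] at h
  rw [Matrix.mul_apply, Fin.sum_univ_six]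
  simp only [EmRow, Matrix.of_apply]
  by_cases hi : i = (5 : Fin 6)
  · subst hi
    simp +decide only [if_true, if_false]
    simp only [one_mul, zero_mul, add_zero, zero_add]
    linear_combination h - M 4 j * two0
  · simp +decide only [if_neg hi]
    simp

private lemma Pm_mul_const (σ : Perm (Fin 6)) (c : Fin 4 → F2) :
    Pm σ * Matrix.of (fun (_ : Fin 6) (j : Fin 4) => c j)
      = Matrix.of (fun (_ : Fin 6) (j : Fin 4) => c j) := by
  unfold Pm
  rw [PEquiv.toMatrix_toPEquiv_mul]
  ext i j
  rfl

private lemma Am_mul_const (c : Fin 4 → F2) :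
    Am * Matrix.of (fun (_ : Fin 6) (j : Fin 4) => c j) = 0 := by
  ext i j
  rw [Matrix.mul_apply, Fin.sum_univ_six]
  simp only [AmRow, Matrix.of_apply]
  fin_cases i <;> simp +decide only [if_true, if_false] <;>
    simp [CharTwo.add_self_eq_zero]

private lemma key_zero (σ τ : Perm (Fin 6)) :
    Am * (Pm σ * (Em * (Pm τ * Sm))) = 0 := by
  rw [Em_mul _ (colsum τ), Pm_mul_const, Am_mul_const]

private lemma phi0_mul (σ τ : Perm (Fin 6)) : phi0 (σ * τ) = phi0 σ * phi0 τ := by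
  unfold phi0
  rw [_root_.mul_inv_rev, Pm_mul]
  have hz := key_zero σ⁻¹ τ⁻¹
  have hSA' : ∀ X : Matrix (Fin 6) (Fin 4) F2, Sm * (Am * X) = X + Em * X := by
    intro X
    rw [← Matrix.mul_assoc, f_SA, Matrix.add_mul, Matrix.one_mul]
  simp only [Matrix.mul_assoc]
  rw [hSA' (Pm τ⁻¹ * Sm), Matrix.mul_add, Matrix.mul_add]
  rw [show Am * (Pm σ⁻¹ * (Em * (Pm τ⁻¹ * Sm))) = 0 by
    simpa [Matrix.mul_assoc] using hz, add_zero]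

private lemma phi0_one : phi0 1 = 1 := by
  unfold phi0
  rw [inv_one, Pm_one, Matrix.mul_one, f_AS]

private lemma phi0_inv_mul (σ : Perm (Fin 6)) : phi0 σ⁻¹ * phi0 σ = 1 := by
  rw [← phi0_mul, inv_mul_cancel, phi0_one]

private lemma phi0_mul_inv (σ : Perm (Fin 6)) : phi0 σ * phi0 σ⁻¹ = 1 := by
  rw [← phi0_mul, mul_inv_cancel, phi0_one]

private lemma hGG : Gm * Gm = 1 := by decide

private lemma G_pres (σ : Perm (Fin 6)) : (phi0 σ)ᵀ * Gm * phi0 σ = Gm := by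
  have hM : ∀ j, ∑ i, (Pm σ⁻¹ * Sm) i j = 0 := colsum σ⁻¹
  set M : Matrix (Fin 6) (Fin 4) F2 := Pm σ⁻¹ * Sm with hMdef
  have hphi : phi0 σ = Am * M := by rw [phi0, Matrix.mul_assoc]
  have hN : Sm * (Am * M) = M + Matrix.of (fun _ j => M 4 j) := by
    rw [← Matrix.mul_assoc, f_SA, Matrix.add_mul, Matrix.one_mul, Em_mul M hM]
  have hMM : Mᵀ * M = Gm := by
    rw [hMdef, transpose_mul, Pm_transpose, inv_inv]
    calc Smᵀ * Pm σ * (Pm σ⁻¹ * Sm) = Smᵀ * (Pm σ * Pm σ⁻¹) * Sm := by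
          simp only [Matrix.mul_assoc]
      _ = Smᵀ * Sm := by rw [← Pm_mul, inv_mul_cancel, Pm_one, Matrix.mul_one]
      _ = Gm := f_G
  have hMC : Mᵀ * Matrix.of (fun (_ : Fin 6) (j : Fin 4) => M 4 j) = 0 := by
    ext i j
    simp only [Matrix.mul_apply, transpose_apply, Matrix.of_apply, Matrix.zero_apply]
    rw [← Finset.sum_mul, hM i, zero_mul]
  have hCM : (Matrix.of (fun (_ : Fin 6) (j : Fin 4) => M 4 j))ᵀ * M = 0 := by
    ext i j
    simp only [Matrix.mul_apply, transpose_apply, Matrix.of_apply, Matrix.zero_apply]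
    rw [← Finset.mul_sum, hM j, mul_zero]
  have hCC : (Matrix.of (fun (_ : Fin 6) (j : Fin 4) => M 4 j))ᵀ *
      Matrix.of (fun (_ : Fin 6) (j : Fin 4) => M 4 j) = 0 := by
    ext i j
    simp only [Matrix.mul_apply, transpose_apply, Matrix.of_apply, Matrix.zero_apply,
      Finset.sum_const, Finset.card_univ, Fintype.card_fin, nsmul_eq_mul]
    have h6 : ((6 : ℕ) : F2) = 0 := by decide
    rw [h6, zero_mul]
  calc (phi0 σ)ᵀ * Gm * phi0 σ
      = (Am * M)ᵀ * (Smᵀ * Sm) * (Am * M) := by rw [hphi, f_G]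
    _ = (Sm * (Am * M))ᵀ * (Sm * (Am * M)) := by
        conv_rhs => rw [transpose_mul]
        simp only [Matrix.mul_assoc]
    _ = (M + Matrix.of (fun _ j => M 4 j))ᵀ * (M + Matrix.of (fun _ j => M 4 j)) := by
        rw [hN]
    _ = Mᵀ * M + Mᵀ * Matrix.of (fun (_ : Fin 6) (j : Fin 4) => M 4 j) +
        ((Matrix.of (fun (_ : Fin 6) (j : Fin 4) => M 4 j))ᵀ * M +
         (Matrix.of (fun (_ : Fin 6) (j : Fin 4) => M 4 j))ᵀ *
           Matrix.of (fun (_ : Fin 6) (j : Fin 4) => M 4 j)) := by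
        rw [transpose_add, Matrix.add_mul, Matrix.mul_add, Matrix.mul_add]
    _ = Gm := by rw [hMM, hMC, hCM, hCC]; simp

private lemma G_pres' (σ : Perm (Fin 6)) : phi0 σ * Gm * (phi0 σ)ᵀ = Gm := by
  have h := G_pres σ
  have hinv : Gm * (phi0 σ)ᵀ * Gm = phi0 σ⁻¹ := by
    have h1 : Gm * (phi0 σ)ᵀ * Gm * phi0 σ = 1 := by
      calc Gm * (phi0 σ)ᵀ * Gm * phi0 σ = Gm * ((phi0 σ)ᵀ * (Gm * phi0 σ)) := by
            simp only [Matrix.mul_assoc]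
        _ = Gm * Gm := by rw [← Matrix.mul_assoc ((phi0 σ)ᵀ) Gm (phi0 σ), h]
        _ = 1 := hGG
    calc Gm * (phi0 σ)ᵀ * Gm
        = Gm * (phi0 σ)ᵀ * Gm * (phi0 σ * phi0 σ⁻¹) := by
          rw [phi0_mul_inv, Matrix.mul_one]
      _ = (Gm * (phi0 σ)ᵀ * Gm * phi0 σ) * phi0 σ⁻¹ := by simp only [Matrix.mul_assoc]
      _ = phi0 σ⁻¹ := by rw [h1, Matrix.one_mul]
  calc phi0 σ * Gm * (phi0 σ)ᵀ
      = phi0 σ * Gm * (phi0 σ)ᵀ * (Gm * Gm) := by rw [hGG, Matrix.mul_one]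
    _ = phi0 σ * (Gm * (phi0 σ)ᵀ * Gm) * Gm := by simp only [Matrix.mul_assoc]
    _ = phi0 σ * phi0 σ⁻¹ * Gm := by rw [hinv]
    _ = Gm := by rw [phi0_mul_inv, Matrix.one_mul]

/-! ### Part 2: transport into the symplectic group -/

private def J4c : Matrix (Fin 4) (Fin 4) F2 := !![0,0,1,0; 0,0,0,1; 1,0,0,0; 0,1,0,0]
private def Tm : Matrix (Fin 4) (Fin 4) F2 := !![1,0,0,0; 0,0,1,1; 0,1,0,0; 1,1,1,0]
private def Tim : Matrix (Fin 4) (Fin 4) F2 := !![1,0,0,0; 0,0,1,0; 1,0,1,1; 1,1,1,1]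

private lemma f_TTi : Tm * Tim = 1 := by decide
private lemma f_TiT : Tim * Tm = 1 := by decide
private lemma f_TGT : Tm * Gm * Tmᵀ = J4c := by decide
private lemma f_TiJTi : Tim * J4c * Timᵀ = Gm := by decide

private def e4 : Fin 2 ⊕ Fin 2 ≃ Fin 4 := finSumFinEquiv

private lemma f_J : J4c.submatrix e4 e4 = Matrix.J (Fin 2) F2 := by decide

private def psi (σ : Perm (Fin 6)) : Matrix (Fin 4) (Fin 4) F2 := Tm * phi0 σ * Tim

private lemma psi_J (σ : Perm (Fin 6)) : psi σ * J4c * (psi σ)ᵀ = J4c := by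
  unfold psi
  calc Tm * phi0 σ * Tim * J4c * (Tm * phi0 σ * Tim)ᵀ
      = Tm * (phi0 σ * (Tim * (J4c * Timᵀ)) * ((phi0 σ)ᵀ * Tmᵀ)) := by
        rw [transpose_mul, transpose_mul]; simp only [Matrix.mul_assoc]
    _ = Tm * (phi0 σ * Gm * ((phi0 σ)ᵀ * Tmᵀ)) := by
        rw [← Matrix.mul_assoc Tim J4c Timᵀ, f_TiJTi]
    _ = Tm * (phi0 σ * Gm * (phi0 σ)ᵀ) * Tmᵀ := by simp only [← Matrix.mul_assoc]
    _ = Tm * Gm * Tmᵀ := by rw [G_pres']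
    _ = J4c := f_TGT

private lemma psi_mul (σ τ : Perm (Fin 6)) : psi (σ * τ) = psi σ * psi τ := by
  unfold psi
  rw [phi0_mul]
  calc Tm * (phi0 σ * phi0 τ) * Tim
      = Tm * (phi0 σ * 1 * phi0 τ) * Tim := by rw [Matrix.mul_one]
    _ = Tm * (phi0 σ * (Tim * Tm) * phi0 τ) * Tim := by rw [f_TiT]
    _ = Tm * phi0 σ * Tim * (Tm * phi0 τ * Tim) := by simp only [Matrix.mul_assoc]

private lemma psi_one : psi 1 = 1 := by
  unfold psi
  rw [phi0_one, Matrix.mul_one, f_TTi]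

private def rho : Matrix (Fin 4) (Fin 4) F2 ≃* Matrix (Fin 2 ⊕ Fin 2) (Fin 2 ⊕ Fin 2) F2 :=
  (Matrix.reindexAlgEquiv F2 F2 e4.symm).toMulEquiv

private lemma rho_apply (M : Matrix (Fin 4) (Fin 4) F2) : rho M = M.submatrix e4 e4 := rfl

private lemma rho_transpose (M : Matrix (Fin 4) (Fin 4) F2) : (rho M)ᵀ = rho Mᵀ := by
  rw [rho_apply, rho_apply, transpose_submatrix]

private lemma psi_mem (σ : Perm (Fin 6)) :
    rho (psi σ) ∈ Matrix.symplecticGroup (Fin 2) F2 := by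
  rw [SymplecticGroup.mem_iff, ← f_J, ← rho_apply, rho_transpose, ← _root_.map_mul, ← _root_.map_mul]
  exact congrArg rho (psi_J σ)

private def Phi : Perm (Fin 6) →* Matrix.symplecticGroup (Fin 2) F2 :=
  MonoidHom.mk' (fun σ => ⟨rho (psi σ), psi_mem σ⟩)
    (fun σ τ => Subtype.ext (by
      show rho (psi (σ * τ)) = rho (psi σ) * rho (psi τ)
      rw [psi_mul, _root_.map_mul]))

/-! ### Injectivity of `Phi` -/

private lemma key0 : ∀ m k : Fin 6,
    (∀ j, Sm m j + Sm k j = (1 : Matrix (Fin 4) (Fin 4) F2) 0 j) →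
    (m = 0 ∧ k = 4) ∨ (m = 4 ∧ k = 0) := by decide
private lemma key1 : ∀ m k : Fin 6,
    (∀ j, Sm m j + Sm k j = (1 : Matrix (Fin 4) (Fin 4) F2) 1 j) →
    (m = 1 ∧ k = 4) ∨ (m = 4 ∧ k = 1) := by decide
private lemma key2 : ∀ m k : Fin 6,
    (∀ j, Sm m j + Sm k j = (1 : Matrix (Fin 4) (Fin 4) F2) 2 j) →
    (m = 2 ∧ k = 4) ∨ (m = 4 ∧ k = 2) := by decide
private lemma key3 : ∀ m k : Fin 6,
    (∀ j, Sm m j + Sm k j = (1 : Matrix (Fin 4) (Fin 4) F2) 3 j) →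
    (m = 3 ∧ k = 4) ∨ (m = 4 ∧ k = 3) := by decide
private lemma last5 : ∀ u : Fin 6, u ≠ 0 → u ≠ 1 → u ≠ 2 → u ≠ 3 → u ≠ 4 → u = 5 := by
  decide

private lemma ker_aux (τ : Perm (Fin 6)) (h : Am * Pm τ * Sm = 1) : τ = 1 := by
  rw [Matrix.mul_assoc] at h
  unfold Pm at h
  rw [PEquiv.toMatrix_toPEquiv_mul] at h
  have g : ∀ (i : Fin 4) (j : Fin 4), ∑ k : Fin 6, Am i k * Sm (τ k) j
      = (1 : Matrix (Fin 4) (Fin 4) F2) i j := by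
    intro i j
    have h' : (Am * (Sm.submatrix τ id)) i j = (1 : Matrix (Fin 4) (Fin 4) F2) i j := by
      rw [h]
    rw [Matrix.mul_apply] at h'
    simpa only [submatrix_apply, id_eq] using h'
  have g0 : ∀ j, Sm (τ 0) j + Sm (τ 4) j = (1 : Matrix (Fin 4) (Fin 4) F2) 0 j := by
    intro j; have hg := g 0 j; rw [Fin.sum_univ_six] at hg
    simp only [AmRow] at hg
    simpa +decide only [if_true, if_false, one_mul, zero_mul, add_zero, zero_add] using hg
  have g1 : ∀ j, Sm (τ 1) j + Sm (τ 4) j = (1 : Matrix (Fin 4) (Fin 4) F2) 1 j := by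
    intro j; have hg := g 1 j; rw [Fin.sum_univ_six] at hg
    simp only [AmRow] at hg
    simpa +decide only [if_true, if_false, one_mul, zero_mul, add_zero, zero_add] using hg
  have g2 : ∀ j, Sm (τ 2) j + Sm (τ 4) j = (1 : Matrix (Fin 4) (Fin 4) F2) 2 j := by
    intro j; have hg := g 2 j; rw [Fin.sum_univ_six] at hg
    simp only [AmRow] at hg
    simpa +decide only [if_true, if_false, one_mul, zero_mul, add_zero, zero_add] using hg
  have g3 : ∀ j, Sm (τ 3) j + Sm (τ 4) j = (1 : Matrix (Fin 4) (Fin 4) F2) 3 j := by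
    intro j; have hg := g 3 j; rw [Fin.sum_univ_six] at hg
    simp only [AmRow] at hg
    simpa +decide only [if_true, if_false, one_mul, zero_mul, add_zero, zero_add] using hg
  have e44 : τ 4 = 4 := by
    rcases key0 _ _ g0 with ⟨_, hk⟩ | ⟨_, hk⟩
    · exact hk
    · rcases key1 _ _ g1 with ⟨_, hk'⟩ | ⟨_, hk'⟩ <;> rw [hk] at hk' <;>
        exact absurd hk' (by decide)
  have e0 : τ 0 = 0 := by
    rcases key0 _ _ g0 with ⟨hm, _⟩ | ⟨_, hk⟩
    · exact hm
    · rw [e44] at hk; exact absurd hk (by decide)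
  have e1 : τ 1 = 1 := by
    rcases key1 _ _ g1 with ⟨hm, _⟩ | ⟨_, hk⟩
    · exact hm
    · rw [e44] at hk; exact absurd hk (by decide)
  have e2 : τ 2 = 2 := by
    rcases key2 _ _ g2 with ⟨hm, _⟩ | ⟨_, hk⟩
    · exact hm
    · rw [e44] at hk; exact absurd hk (by decide)
  have e3 : τ 3 = 3 := by
    rcases key3 _ _ g3 with ⟨hm, _⟩ | ⟨_, hk⟩
    · exact hm
    · rw [e44] at hk; exact absurd hk (by decide)
  have e5 : τ 5 = 5 := by
    refine last5 (τ 5) (fun hh => ?_) (fun hh => ?_) (fun hh => ?_) (fun hh => ?_)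
      (fun hh => ?_)
    · exact absurd (τ.injective (show τ 5 = τ 0 by rw [hh, e0])) (by decide)
    · exact absurd (τ.injective (show τ 5 = τ 1 by rw [hh, e1])) (by decide)
    · exact absurd (τ.injective (show τ 5 = τ 2 by rw [hh, e2])) (by decide)
    · exact absurd (τ.injective (show τ 5 = τ 3 by rw [hh, e3])) (by decide)
    · exact absurd (τ.injective (show τ 5 = τ 4 by rw [hh, e44])) (by decide)
  apply Equiv.ext
  intro x
  fin_cases x <;> simp only [Equiv.Perm.one_apply]
  · exact e0
  · exact e1
  · exact e2
  · exact e3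
  · exact e44
  · exact e5

private lemma Phi_inj : Function.Injective Phi := by
  rw [injective_iff_map_eq_one]
  intro σ h
  have h1 : rho (psi σ) = 1 := Subtype.ext_iff.mp h
  have h2' : psi σ = 1 := by
    have := congrArg rho.symm h1
    rwa [MulEquiv.symm_apply_apply, _root_.map_one] at this
  have h3 : phi0 σ = 1 := by
    have hx : Tim * (Tm * phi0 σ * Tim) * Tm = Tim * 1 * Tm := by
      rw [show Tm * phi0 σ * Tim = psi σ from rfl, h2']
    rw [Matrix.mul_one, f_TiT] at hx
    calc phi0 σ = (Tim * Tm) * phi0 σ * (Tim * Tm) := by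
          rw [f_TiT, Matrix.one_mul, Matrix.mul_one]
      _ = Tim * (Tm * phi0 σ * Tim) * Tm := by simp only [Matrix.mul_assoc]
      _ = 1 := hx
  have h4 : σ⁻¹ = 1 := ker_aux σ⁻¹ h3
  rw [← inv_inv σ, h4, inv_one]

/-! ### Part 3: cardinality bound via the six odd quadratic forms -/

private abbrev V4 := (Fin 2 ⊕ Fin 2) → F2

private def q0 : V4 → F2 := fun v =>
  v (Sum.inl 0) * v (Sum.inr 0) + v (Sum.inl 1) * v (Sum.inr 1)

private def bf (u v : V4) : F2 :=
  u (Sum.inl 0) * v (Sum.inr 0) + u (Sum.inr 0) * v (Sum.inl 0) +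
  u (Sum.inl 1) * v (Sum.inr 1) + u (Sum.inr 1) * v (Sum.inl 1)

private lemma polar (x y : V4) : q0 (x + y) = q0 x + q0 y + bf x y := by
  simp only [q0, bf, Pi.add_apply]; ring

private lemma bf_add_right (a x y : V4) : bf a (x + y) = bf a x + bf a y := by
  simp only [bf, Pi.add_apply]; ring

private lemma bf_J : ∀ u v : V4, bf u v = u ⬝ᵥ (Matrix.J (Fin 2) F2) *ᵥ v := by decide
private lemma d_odd1 : ∀ a : V4, q0 a = 1 →
    Fintype.card {v : V4 // q0 v + bf a v = 1} = 10 := by decide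
private lemma d_odd2 : ∀ a : V4,
    Fintype.card {v : V4 // q0 v + bf a v = 1} = 10 → q0 a = 1 := by decide
private lemma nondeg : ∀ a b : V4, (∀ w : V4, bf a w = bf b w) → a = b := by decide
private lemma small : ∀ w : V4,
    (∀ a b : V4, q0 a = 1 → q0 b = 1 → bf a w = bf b w) → w = 0 := by decide
private lemma decomp : ∀ v : V4,
    v = v (Sum.inl 0) • (Pi.single (Sum.inl 0) 1 : V4)
      + (v (Sum.inl 1) • (Pi.single (Sum.inl 1) 1 : V4)
      + (v (Sum.inr 0) • (Pi.single (Sum.inr 0) 1 : V4)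
      + v (Sum.inr 1) • (Pi.single (Sum.inr 1) 1 : V4))) := by decide
private lemma cardOdd : Fintype.card {a : V4 // q0 a = 1} = 6 := by decide

private lemma bf_sympl {M : Matrix (Fin 2 ⊕ Fin 2) (Fin 2 ⊕ Fin 2) F2}
    (hM : M ∈ Matrix.symplecticGroup (Fin 2) F2) (x y : V4) :
    bf (M *ᵥ x) (M *ᵥ y) = bf x y := by
  rw [SymplecticGroup.mem_iff'] at hM
  rw [bf_J, bf_J]
  calc (M *ᵥ x) ⬝ᵥ (Matrix.J (Fin 2) F2) *ᵥ (M *ᵥ y)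
      = (x ᵥ* Mᵀ) ⬝ᵥ ((Matrix.J (Fin 2) F2) * M) *ᵥ y := by
        rw [Matrix.vecMul_transpose, Matrix.mulVec_mulVec]
    _ = x ⬝ᵥ Mᵀ *ᵥ (((Matrix.J (Fin 2) F2) * M) *ᵥ y) :=
        (Matrix.dotProduct_mulVec _ _ _).symm
    _ = x ⬝ᵥ (Mᵀ * ((Matrix.J (Fin 2) F2) * M)) *ᵥ y := by rw [Matrix.mulVec_mulVec]
    _ = x ⬝ᵥ (Matrix.J (Fin 2) F2) *ᵥ y := by rw [← Matrix.mul_assoc, hM]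

private def cF (M : Matrix (Fin 2 ⊕ Fin 2) (Fin 2 ⊕ Fin 2) F2) (a : V4) (v : V4) : F2 :=
  q0 (M *ᵥ v) + bf a (M *ᵥ v) + q0 v

private def sw : (Fin 2 ⊕ Fin 2) → (Fin 2 ⊕ Fin 2) := Sum.elim Sum.inr Sum.inl

private def aim (M : Matrix (Fin 2 ⊕ Fin 2) (Fin 2 ⊕ Fin 2) F2) (a : V4) : V4 :=
  fun i => cF M a (Pi.single (sw i) 1 : V4)

private lemma cF_add {M : Matrix (Fin 2 ⊕ Fin 2) (Fin 2 ⊕ Fin 2) F2}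
    (hM : M ∈ Matrix.symplecticGroup (Fin 2) F2) (a x y : V4) :
    cF M a (x + y) = cF M a x + cF M a y := by
  unfold cF
  rw [Matrix.mulVec_add, polar, polar, bf_add_right, bf_sympl hM]
  linear_combination (bf x y) * two0

private lemma cF_zero {M : Matrix (Fin 2 ⊕ Fin 2) (Fin 2 ⊕ Fin 2) F2} (a : V4) :
    cF M a 0 = 0 := by
  unfold cF
  rw [Matrix.mulVec_zero]
  norm_num [q0, bf]

private lemma cF_smul {M : Matrix (Fin 2 ⊕ Fin 2) (Fin 2 ⊕ Fin 2) F2} (a : V4) (t : F2)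
    (x : V4) : cF M a (t • x) = t * cF M a x := by
  have h01 : ∀ t : F2, t = 0 ∨ t = 1 := by decide
  rcases h01 t with h | h <;> subst h
  · rw [zero_smul, cF_zero, zero_mul]
  · rw [one_smul, one_mul]

private lemma cF_lin {M : Matrix (Fin 2 ⊕ Fin 2) (Fin 2 ⊕ Fin 2) F2}
    (hM : M ∈ Matrix.symplecticGroup (Fin 2) F2) (a v : V4) :
    cF M a v = bf (aim M a) v := by
  conv_lhs => rw [decomp v]
  rw [cF_add hM, cF_add hM, cF_add hM, cF_smul, cF_smul, cF_smul, cF_smul]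
  simp only [bf, aim, sw, Sum.elim_inl, Sum.elim_inr]
  ring

private lemma q_eq {M : Matrix (Fin 2 ⊕ Fin 2) (Fin 2 ⊕ Fin 2) F2}
    (hM : M ∈ Matrix.symplecticGroup (Fin 2) F2) (a v : V4) :
    q0 v + bf (aim M a) v = q0 (M *ᵥ v) + bf a (M *ᵥ v) := by
  have hc := cF_lin hM a v
  unfold cF at hc
  linear_combination hc.symm + q0 v * two0

private abbrev OddV := {a : V4 // q0 a = 1}

section
variable (Asp : Matrix.symplecticGroup (Fin 2) F2)

private def Bmat : Matrix (Fin 2 ⊕ Fin 2) (Fin 2 ⊕ Fin 2) F2 := ↑(Asp⁻¹)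

private lemma hAB : (Asp : Matrix (Fin 2 ⊕ Fin 2) (Fin 2 ⊕ Fin 2) F2) * Bmat Asp = 1 := by
  show (Asp : Matrix (Fin 2 ⊕ Fin 2) (Fin 2 ⊕ Fin 2) F2) *
    ((Asp⁻¹ : Matrix.symplecticGroup (Fin 2) F2) : Matrix (Fin 2 ⊕ Fin 2) (Fin 2 ⊕ Fin 2) F2) = 1
  rw [← Submonoid.coe_mul, mul_inv_cancel, OneMemClass.coe_one]

private lemma hBA : Bmat Asp * (Asp : Matrix (Fin 2 ⊕ Fin 2) (Fin 2 ⊕ Fin 2) F2) = 1 := by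
  show ((Asp⁻¹ : Matrix.symplecticGroup (Fin 2) F2) : Matrix (Fin 2 ⊕ Fin 2) (Fin 2 ⊕ Fin 2) F2) *
    (Asp : Matrix (Fin 2 ⊕ Fin 2) (Fin 2 ⊕ Fin 2) F2) = 1
  rw [← Submonoid.coe_mul, inv_mul_cancel, OneMemClass.coe_one]

private def mve : V4 ≃ V4 where
  toFun v := (Asp : Matrix (Fin 2 ⊕ Fin 2) (Fin 2 ⊕ Fin 2) F2) *ᵥ v
  invFun v := Bmat Asp *ᵥ v
  left_inv v := by
    show Bmat Asp *ᵥ ((Asp : Matrix (Fin 2 ⊕ Fin 2) (Fin 2 ⊕ Fin 2) F2) *ᵥ v) = v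
    rw [Matrix.mulVec_mulVec, hBA, Matrix.one_mulVec]
  right_inv v := by
    show (Asp : Matrix (Fin 2 ⊕ Fin 2) (Fin 2 ⊕ Fin 2) F2) *ᵥ (Bmat Asp *ᵥ v) = v
    rw [Matrix.mulVec_mulVec, hAB, Matrix.one_mulVec]

private lemma odd_pres (a : V4) (ha : q0 a = 1) :
    q0 (aim (Asp : Matrix (Fin 2 ⊕ Fin 2) (Fin 2 ⊕ Fin 2) F2) a) = 1 := by
  apply d_odd2
  have c1 : Fintype.card {v : V4 //
        q0 v + bf (aim (Asp : Matrix (Fin 2 ⊕ Fin 2) (Fin 2 ⊕ Fin 2) F2) a) v = 1}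
      = Fintype.card {v : V4 // q0 (mve Asp v) + bf a (mve Asp v) = 1} :=
    Fintype.card_congr (Equiv.subtypeEquiv (Equiv.refl V4) (fun v => by
      rw [Equiv.refl_apply, q_eq Asp.2 a v]
      exact Iff.rfl))
  have c2 : Fintype.card {v : V4 // q0 (mve Asp v) + bf a (mve Asp v) = 1}
      = Fintype.card {w : V4 // q0 w + bf a w = 1} :=
    Fintype.card_congr (Equiv.subtypeEquiv (mve Asp) (fun v => Iff.rfl))
  rw [← d_odd1 a ha]
  rw [← c2, ← c1]

private def Fmap : OddV ↪ OddV where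
  toFun a := ⟨aim (Asp : Matrix (Fin 2 ⊕ Fin 2) (Fin 2 ⊕ Fin 2) F2) a.1,
    odd_pres Asp a.1 a.2⟩
  inj' := by
    rintro ⟨a, ha⟩ ⟨b, hb⟩ hab
    simp only [Subtype.mk.injEq] at hab
    refine Subtype.ext (nondeg a b fun w => ?_)
    obtain ⟨v, rfl⟩ : ∃ v, (Asp : Matrix (Fin 2 ⊕ Fin 2) (Fin 2 ⊕ Fin 2) F2) *ᵥ v = w :=
      (mve Asp).surjective w
    have ea := q_eq Asp.2 a v
    have eb := q_eq Asp.2 b v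
    rw [hab] at ea
    linear_combination eb - ea

end

private lemma Fmap_inj : Function.Injective Fmap := by
  intro A1 A2 h
  have haim : ∀ a : V4, ∀ ha : q0 a = 1,
      aim (A1 : Matrix (Fin 2 ⊕ Fin 2) (Fin 2 ⊕ Fin 2) F2) a
        = aim (A2 : Matrix (Fin 2 ⊕ Fin 2) (Fin 2 ⊕ Fin 2) F2) a := by
    intro a ha
    have := congrArg (fun f : OddV ↪ OddV => (f ⟨a, ha⟩ : OddV).1) h
    exact this
  have dkey : ∀ v : V4, (A1 : Matrix (Fin 2 ⊕ Fin 2) (Fin 2 ⊕ Fin 2) F2) *ᵥ v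
      = (A2 : Matrix (Fin 2 ⊕ Fin 2) (Fin 2 ⊕ Fin 2) F2) *ᵥ v := by
    intro v
    have hz : (A1 : Matrix (Fin 2 ⊕ Fin 2) (Fin 2 ⊕ Fin 2) F2) *ᵥ v
        + (A2 : Matrix (Fin 2 ⊕ Fin 2) (Fin 2 ⊕ Fin 2) F2) *ᵥ v = 0 := by
      apply small
      intro a b ha hb
      rw [bf_add_right, bf_add_right]
      have ea1 := q_eq A1.2 a v
      have ea2 := q_eq A2.2 a v
      have eb1 := q_eq A1.2 b v
      have eb2 := q_eq A2.2 b v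
      rw [haim a ha] at ea1
      rw [haim b hb] at eb1
      linear_combination ea1 - ea2 - eb1 + eb2 +
        (bf a ((A1 : Matrix (Fin 2 ⊕ Fin 2) (Fin 2 ⊕ Fin 2) F2) *ᵥ v)
          - bf a ((A2 : Matrix (Fin 2 ⊕ Fin 2) (Fin 2 ⊕ Fin 2) F2) *ᵥ v)
          + bf b ((A2 : Matrix (Fin 2 ⊕ Fin 2) (Fin 2 ⊕ Fin 2) F2) *ᵥ v)
          - bf b ((A1 : Matrix (Fin 2 ⊕ Fin 2) (Fin 2 ⊕ Fin 2) F2) *ᵥ v)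
          + bf a ((A2 : Matrix (Fin 2 ⊕ Fin 2) (Fin 2 ⊕ Fin 2) F2) *ᵥ v)
          - bf b ((A2 : Matrix (Fin 2 ⊕ Fin 2) (Fin 2 ⊕ Fin 2) F2) *ᵥ v)) * two0
    funext i
    have hzi := congrFun hz i
    simp only [Pi.add_apply, Pi.zero_apply] at hzi
    linear_combination hzi -
      ((A2 : Matrix (Fin 2 ⊕ Fin 2) (Fin 2 ⊕ Fin 2) F2) *ᵥ v) i * two0
  apply Subtype.ext
  ext i j
  have := congrFun (dkey (Pi.single j 1)) i
  simpa [Matrix.mulVec_single] using this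

/-! ### Assembly -/

private instance : DecidablePred (· ∈ Matrix.symplecticGroup (Fin 2) F2) := fun A =>
  decidable_of_iff _ SymplecticGroup.mem_iff.symm

/-- The symplectic group `Sp(4,𝔽₂)` is isomorphic to the symmetric group `S₆`. -/
theorem sp4_f2_iso_s6 :
    Nonempty (Matrix.symplecticGroup (Fin 2) (ZMod 2) ≃* Equiv.Perm (Fin 6)) := by
  have hfact : Nat.factorial 6 = 720 := rfl
  have hle1 : Fintype.card (Matrix.symplecticGroup (Fin 2) F2) ≤ 720 := by
    have := Fintype.card_le_of_injective Fmap Fmap_inj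
    rwa [Fintype.card_embedding_eq, cardOdd, show Nat.descFactorial 6 6 = 720 from rfl]
      at this
  have hle2 : 720 ≤ Fintype.card (Matrix.symplecticGroup (Fin 2) F2) := by
    have := Fintype.card_le_of_injective Phi Phi_inj
    rwa [Fintype.card_perm, Fintype.card_fin, hfact] at this
  have hcard : Fintype.card (Perm (Fin 6))
      = Fintype.card (Matrix.symplecticGroup (Fin 2) F2) := by
    rw [Fintype.card_perm, Fintype.card_fin, hfact]
    omega
  have hbij : Function.Bijective Phi :=
    (Fintype.bijective_iff_injective_and_card Phi).2 ⟨Phi_inj, hcard⟩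
  exact ⟨(MulEquiv.ofBijective Phi hbij).symm⟩
end
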